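/- Let α > 0, C > 0 and let π : ℝ → [0,∞) be measurable with π = 0 on (−∞,0] and lim_{x→∞} π(x)e^{αx} = C. Let μ be a finite Borel measure on ℝ with μ((−∞,0]) = 0. Then, in [0,∞], liminf_{x→∞} (1/π(x)) ∫_0^x μ((x−z,∞)) π(z) dz ≥ ∫_0^∞ μ((z,∞)) e^{αz} dz. -/

import Mathlib

open MeasureTheory Set Filter
open scoped ENNReal

/-- asymptotic lower bound (in `[0,∞]`) for `(μ̄ₛ*π)(x)/π(x)` as `x → ∞`
under the exponential-tail assumption on `π`. -/
theorem liminf_tail_convolution_ratio_ge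
    (α C : ℝ) (hα : 0 < α) (hC : 0 < C)
    (π : ℝ → ℝ) (hπ_meas : Measurable π) (hπ_nonneg : ∀ x, 0 ≤ π x)
    (hπ_zero : ∀ x ≤ 0, π x = 0)
    (hlim : Tendsto (fun x => π x * Real.exp (α * x)) atTop (nhds C))
    (μ : Measure ℝ) [IsFiniteMeasure μ] (hμ : μ (Iic 0) = 0) :
    (∫⁻ z in Ioi 0, μ (Ioi z) * ENNReal.ofReal (Real.exp (α * z)))
      ≤ Filter.liminf
          (fun x => (∫⁻ z in Ioo 0 x, μ (Ioi (x - z)) * ENNReal.ofReal (π z))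
            / ENNReal.ofReal (π x)) atTop := by
  set h : ℝ → ℝ≥0∞ := fun z => μ (Ioi z) * ENNReal.ofReal (Real.exp (α * z)) with hh
  have hh_meas : Measurable h := by
    apply Measurable.mul
    · exact Antitone.measurable (fun z w hzw => measure_mono (Ioi_subset_Ioi hzw))
    · exact (Real.measurable_exp.comp (measurable_const.mul measurable_id)).ennreal_ofReal
  -- Step 1: the integral over Ioi 0 is the sup of integrals over Ioo 0 n
  have hsup : (∫⁻ z in Ioi 0, h z) = ⨆ n : ℕ, ∫⁻ z in Ioo 0 (n : ℝ), h z := by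
    have key : ∀ z, (⨆ n : ℕ, (Ioo (0:ℝ) (n:ℝ)).indicator h z) = (Ioi (0:ℝ)).indicator h z := by
      intro z
      rcases le_or_gt z 0 with hz | hz
      · rw [indicator_of_notMem (by simpa using hz.not_gt)]
        refine le_antisymm (iSup_le fun n => ?_) zero_le
        rw [indicator_of_notMem (fun hm => hz.not_gt hm.1)]
      · obtain ⟨n, hn⟩ := exists_nat_gt z
        rw [indicator_of_mem (mem_Ioi.mpr hz)]
        apply le_antisymm
        · exact iSup_le fun m => indicator_le_self' (fun _ _ => zero_le) z
        · calc h z = (Ioo (0:ℝ) (n:ℝ)).indicator h z :=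
                (indicator_of_mem (mem_Ioo.mpr ⟨hz, hn⟩) h).symm
            _ ≤ ⨆ m : ℕ, (Ioo (0:ℝ) (m:ℝ)).indicator h z :=
                le_iSup (fun m : ℕ => (Ioo (0:ℝ) (m:ℝ)).indicator h z) n
    rw [← lintegral_indicator measurableSet_Ioi]
    simp_rw [← key]
    rw [lintegral_iSup (fun n => hh_meas.indicator measurableSet_Ioo)]
    · congr 1
      ext n
      exact lintegral_indicator measurableSet_Ioo h
    · intro n m hnm
      exact fun z => indicator_le_indicator_of_subset
        (Ioo_subset_Ioo le_rfl (Nat.cast_le.mpr hnm)) (fun _ => zero_le) z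
  rw [Filter.le_liminf_iff]
  intro y hy
  rw [hsup] at hy
  obtain ⟨n, hn⟩ := lt_iSup_iff.mp hy
  set R : ℝ := (n : ℝ) with hRdef
  have hR0 : (0:ℝ) ≤ R := Nat.cast_nonneg n
  set J : ℝ≥0∞ := ∫⁻ z in Ioo 0 R, h z with hJdef
  have hyJ : y < J := hn
  have hJtop : J ≠ ⊤ := by
    have hle : J ≤ (μ univ * ENNReal.ofReal (Real.exp (α * R))) * volume (Ioo (0:ℝ) R) := by
      calc J ≤ ∫⁻ _ in Ioo (0:ℝ) R, μ univ * ENNReal.ofReal (Real.exp (α * R)) := by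
              refine setLIntegral_mono' measurableSet_Ioo (fun z hz => ?_)
              exact mul_le_mul' (measure_mono (subset_univ _))
                (ENNReal.ofReal_le_ofReal (Real.exp_le_exp.mpr
                  (mul_le_mul_of_nonneg_left hz.2.le hα.le)))
        _ = _ := setLIntegral_const _ _
    refine (hle.trans_lt ?_).ne
    exact ENNReal.mul_lt_top (ENNReal.mul_lt_top (measure_lt_top μ univ) ENNReal.ofReal_lt_top)
      (measure_Ioo_lt_top)
  have hy_top : y ≠ ⊤ := (hyJ.trans (lt_top_iff_ne_top.mpr hJtop)).ne
  set Jr : ℝ := J.toReal with hJr_def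
  set yr : ℝ := y.toReal with hyr_def
  have hJr : 0 < Jr := ENNReal.toReal_pos ((zero_le : (0:ℝ≥0∞) ≤ y).trans_lt hyJ).ne' hJtop
  have hyr : yr < Jr := (ENNReal.toReal_lt_toReal hy_top hJtop).mpr hyJ
  have hyr0 : 0 ≤ yr := ENNReal.toReal_nonneg
  set δ : ℝ := (yr / Jr + 1) / 2 with hδdef
  have hq0 : 0 ≤ yr / Jr := div_nonneg hyr0 hJr.le
  have hq1 : yr / Jr < 1 := (div_lt_one hJr).mpr hyr
  have hδ0 : 0 < δ := by simp only [hδdef]; linarith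
  have hδ1 : δ < 1 := by simp only [hδdef]; linarith
  have hδy : yr < δ * Jr := by
    have h1 : yr / Jr < δ := by simp only [hδdef]; linarith
    calc yr = yr / Jr * Jr := by field_simp
      _ < δ * Jr := by exact mul_lt_mul_of_pos_right h1 hJr
  set η : ℝ := C * (1 - δ) / (1 + δ) with hηdef
  have h1δ : (0:ℝ) < 1 + δ := by linarith
  have hη0 : 0 < η := by
    have h2 : (0:ℝ) < 1 - δ := by linarith
    positivity
  have hηC : η < C := by
    rw [hηdef, div_lt_iff₀ h1δ]
    nlinarith
  have hCη : (0:ℝ) < C - η := by linarith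
  have hratio : (C - η) / (C + η) = δ := by
    rw [div_eq_iff (by linarith : C + η ≠ 0), hηdef]
    field_simp
    ring
  have hev : ∀ᶠ u in atTop, π u * Real.exp (α * u) ∈ Set.Ioo (C - η) (C + η) :=
    hlim (Ioo_mem_nhds (by linarith) (by linarith))
  obtain ⟨x₀, hx₀⟩ := eventually_atTop.mp hev
  rw [eventually_atTop]
  refine ⟨max x₀ 0 + R, fun x hx => ?_⟩
  have hx0le : x₀ ≤ x - R := le_trans (le_max_left _ _) (by linarith)
  have h0le : (0:ℝ) ≤ x - R := le_trans (le_max_right _ _) (by linarith)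
  have hx₀x : x₀ ≤ x := by linarith
  -- change of variables
  have hmp : MeasurePreserving (fun z : ℝ => x - z) volume volume :=
    Measure.measurePreserving_sub_left volume x
  have hemb : MeasurableEmbedding (fun z : ℝ => x - z) :=
    (MeasurableEquiv.subLeft x).measurableEmbedding
  have hpre : (fun z : ℝ => x - z) ⁻¹' (Ioo 0 R) = Ioo (x - R) x := by
    ext z
    simp only [mem_preimage, mem_Ioo]
    constructor
    · rintro ⟨h1, h2⟩; constructor <;> linarith
    · rintro ⟨h1, h2⟩; constructor <;> linarith
  have hCoV : ∫⁻ z in Ioo (x - R) x, h (x - z) = J := by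
    rw [hJdef, ← hpre]
    exact hmp.setLIntegral_comp_preimage_emb hemb h (Ioo 0 R)
  -- numerator lower bound
  have hπx : π x ≤ (C + η) * Real.exp (-(α * x)) := by
    have h2 := (hx₀ x hx₀x).2
    have h3 : π x * Real.exp (α * x) * Real.exp (-(α * x))
        ≤ (C + η) * Real.exp (-(α * x)) :=
      mul_le_mul_of_nonneg_right h2.le (Real.exp_pos _).le
    rwa [mul_assoc, ← Real.exp_add, add_neg_cancel, Real.exp_zero, mul_one] at h3
  have hnum : ENNReal.ofReal ((C - η) * Real.exp (-(α * x))) * J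
      ≤ ∫⁻ z in Ioo 0 x, μ (Ioi (x - z)) * ENNReal.ofReal (π z) := by
    rw [← hCoV, ← lintegral_const_mul' _ _ ENNReal.ofReal_ne_top]
    calc ∫⁻ z in Ioo (x-R) x, ENNReal.ofReal ((C - η) * Real.exp (-(α * x))) * h (x - z)
        ≤ ∫⁻ z in Ioo (x-R) x, μ (Ioi (x - z)) * ENNReal.ofReal (π z) := by
          refine setLIntegral_mono' measurableSet_Ioo (fun z hz => ?_)
          have hzx₀ : x₀ ≤ z := le_trans hx0le hz.1.le
          have hπz : (C - η) * Real.exp (-(α * z)) ≤ π z := by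
            have h1 := (hx₀ z hzx₀).1
            have h3 : (C - η) * Real.exp (-(α * z))
                ≤ π z * Real.exp (α * z) * Real.exp (-(α * z)) :=
              mul_le_mul_of_nonneg_right h1.le (Real.exp_pos _).le
            rwa [mul_assoc, ← Real.exp_add, add_neg_cancel, Real.exp_zero, mul_one] at h3
          rw [hh, mul_left_comm, ← ENNReal.ofReal_mul (by positivity)]
          refine mul_le_mul_right (ENNReal.ofReal_le_ofReal ?_) _
          calc (C - η) * Real.exp (-(α * x)) * Real.exp (α * (x - z))
              = (C - η) * Real.exp (-(α * z)) := by
                rw [mul_assoc, ← Real.exp_add]; ring_nf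
            _ ≤ π z := hπz
      _ ≤ ∫⁻ z in Ioo 0 x, μ (Ioi (x - z)) * ENNReal.ofReal (π z) :=
          lintegral_mono_set (fun z hz => ⟨lt_of_le_of_lt h0le hz.1, hz.2⟩)
  -- final chain
  have d3 : (ENNReal.ofReal ((C - η) * Real.exp (-(α * x))) * J)
      / ENNReal.ofReal ((C + η) * Real.exp (-(α * x))) = ENNReal.ofReal δ * J := by
    rw [div_eq_mul_inv, mul_right_comm, ← div_eq_mul_inv,
      ← ENNReal.ofReal_div_of_pos (by positivity),
      mul_div_mul_right _ _ (Real.exp_ne_zero _), hratio]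
  have d2 : (ENNReal.ofReal ((C - η) * Real.exp (-(α * x))) * J)
        / ENNReal.ofReal ((C + η) * Real.exp (-(α * x)))
      ≤ (ENNReal.ofReal ((C - η) * Real.exp (-(α * x))) * J) / ENNReal.ofReal (π x) :=
    ENNReal.div_le_div_left (ENNReal.ofReal_le_ofReal hπx) _
  have d1 : (ENNReal.ofReal ((C - η) * Real.exp (-(α * x))) * J) / ENNReal.ofReal (π x)
      ≤ (∫⁻ z in Ioo 0 x, μ (Ioi (x - z)) * ENNReal.ofReal (π z)) / ENNReal.ofReal (π x) :=
    ENNReal.div_le_div_right hnum _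
  have hfin : y < ENNReal.ofReal δ * J := by
    have e1 : y = ENNReal.ofReal yr := (ENNReal.ofReal_toReal hy_top).symm
    have e2 : ENNReal.ofReal δ * J = ENNReal.ofReal (δ * Jr) := by
      rw [ENNReal.ofReal_mul hδ0.le, hJr_def, ENNReal.ofReal_toReal hJtop]
    rw [e1, e2]
    exact (ENNReal.ofReal_lt_ofReal_iff (by positivity)).mpr hδy
  calc y < ENNReal.ofReal δ * J := hfin
    _ = _ := d3.symm
    _ ≤ _ := d2
    _ ≤ _ := d1
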